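/- Let F be a filter on ℕ containing the cofinite filter (corresponding to an admissible ideal I of subsets of ℕ, i.e. a nontrivial ideal containing all finite sets). Then the ring A_I of I-convergent real sequences (a subring of ℕ → ℝ with pointwise operations) is a transitional ring: A_I is a pm-ring, and there exist a nonempty set Λ and a transition map f : A_I → Set Λ; one may take Λ = ℕ ∪ {0} (with 0 an added point) and f(x) = Z(x) if I-lim x ≠ 0 and f(x) = Z(x) ∪ {0} if I-lim x = 0, where Z(x) = {n ∈ ℕ | x n = 0}. -/

import Mathlib

/-- A semi-transition map on a commutative ring `A` with values in subsets of a
nonempty set `Λ`. -/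
structure IsSemiTransition {A : Type*} [CommRing A] {Λ : Type*} (ψ : A → Set Λ) : Prop where
  nonempty : Nonempty Λ
  map_mul : ∀ a b : A, ψ (a * b) = ψ a ∪ ψ b
  map_one : ψ 1 = ∅
  eq_univ_iff : ∀ a : A, ψ a = Set.univ ↔ a = 0
  inter_eq : ∀ a b : A, ∃ c ∈ Ideal.span {a, b}, ψ a ∩ ψ b = ψ c ∧ ψ c ⊆ ψ (a + b)
  principal : ∀ a b : A, ψ a ∩ ψ b = ∅ →
    ∃ m n : ℕ, 0 < m ∧ 0 < n ∧ (Ideal.span {a ^ m, b ^ n} : Ideal A).IsPrincipal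

/-- A pm-ring: every prime ideal is contained in a unique maximal ideal. -/
def IsPMRing (A : Type*) [CommRing A] : Prop :=
  ∀ P : Ideal A, P.IsPrime → ∃! M : Ideal A, M.IsMaximal ∧ P ≤ M

/-- A transition map: a semi-transition map on a pm-ring which separates points of
`Λ` and admits complementary disjoint sets. -/
structure IsTransition {A : Type*} [CommRing A] {Λ : Type*} (ψ : A → Set Λ) : Prop where
  pm : IsPMRing A
  semi : IsSemiTransition ψ
  separates : ∀ l₁ l₂ : Λ, l₁ ≠ l₂ → ∃ a : A,
    (l₁ ∈ ψ a ∧ l₂ ∉ ψ a) ∨ (l₂ ∈ ψ a ∧ l₁ ∉ ψ a)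
  disjoint : ∀ (l : Λ) (a : A), l ∉ ψ a → ∃ b : A, l ∈ ψ b ∧ ψ a ∩ ψ b = ∅

/-- The set of `I`-convergent real sequences, i.e. sequences converging to some
real limit along the filter `F` associated to the ideal `I`. -/
def IConvSet (F : Filter ℕ) : Set (ℕ → ℝ) :=
  {x : ℕ → ℝ | ∃ l : ℝ, Filter.Tendsto x F (nhds l)}

open Filter Topology

/-- A Gelfand ring is a pm-ring. -/
private lemma pm_of_gelfand {A : Type*} [CommRing A]
    (h : ∀ a b : A, a + b = 1 → ∃ r s : A, (1 + a * r) * (1 + b * s) = 0) :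
    IsPMRing A := by
  intro P hP
  obtain ⟨M, hM, hPM⟩ := Ideal.exists_le_maximal P hP.ne_top
  refine ⟨M, ⟨hM, hPM⟩, ?_⟩
  rintro M' ⟨hM', hPM'⟩
  by_contra hne
  have hsup : M' ⊔ M = ⊤ := by
    by_contra hne'
    have h1 : M' = M' ⊔ M := hM'.eq_of_le hne' le_sup_left
    have h2 : M = M' ⊔ M := hM.eq_of_le hne' le_sup_right
    exact hne (h1.trans h2.symm)
  obtain ⟨a, haM', b, hbM, hab⟩ :=
    Submodule.mem_sup.mp ((Ideal.eq_top_iff_one _).mp hsup)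
  obtain ⟨r, s, hrs⟩ := h a b hab
  have h0 : (1 + a * r) * (1 + b * s) ∈ P := by rw [hrs]; exact P.zero_mem
  rcases hP.mem_or_mem h0 with h1 | h1
  · have hone : (1 : A) ∈ M' := by
      have := M'.sub_mem (hPM' h1) (M'.mul_mem_right r haM')
      simpa using this
    exact hM'.ne_top ((Ideal.eq_top_iff_one _).mpr hone)
  · have hone : (1 : A) ∈ M := by
      have := M.sub_mem (hPM h1) (M.mul_mem_right s hbM)
      simpa using this
    exact hM.ne_top ((Ideal.eq_top_iff_one _).mpr hone)


set_option maxHeartbeats 1000000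
set_option synthInstance.maxHeartbeats 200000

/-- Theorem: for an admissible ideal `I` of subsets of `ℕ` (i.e. a NeBot filter `F`
on `ℕ` containing the cofinite filter), the ring `A_I` of `I`-convergent real
sequences is a transitional ring: it is a pm-ring and the map
`f(x) = Z(x)` if `I`-lim `x ≠ 0`, `f(x) = Z(x) ∪ {0}` if `I`-lim `x = 0`
(into subsets of `ℕ ∪ {0}`, modelled as `Option ℕ` with `none` the added point)
is a transition map on it. -/
theorem iConv_is_transitional (F : Filter ℕ) [F.NeBot] (hF : F ≤ Filter.cofinite) :
    ∃ R : Subring (ℕ → ℝ), (R : Set (ℕ → ℝ)) = IConvSet F ∧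
      IsTransition (fun x : R => {p : Option ℕ |
        (∃ n : ℕ, p = some n ∧ (x : ℕ → ℝ) n = 0) ∨
        (p = none ∧ Filter.Tendsto (x : ℕ → ℝ) F (nhds 0))}) := by
  classical
  have hFtop : F ≤ atTop := Nat.cofinite_eq_atTop ▸ hF
  set R : Subring (ℕ → ℝ) :=
    { carrier := IConvSet F
      mul_mem' := fun ⟨la, ha⟩ ⟨lb, hb⟩ => ⟨la * lb, ha.mul hb⟩
      one_mem' := ⟨1, tendsto_const_nhds⟩
      add_mem' := fun ⟨la, ha⟩ ⟨lb, hb⟩ => ⟨la + lb, ha.add hb⟩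
      zero_mem' := ⟨0, tendsto_const_nhds⟩
      neg_mem' := fun ⟨la, ha⟩ => ⟨-la, ha.neg⟩ } with hRdef
  refine ⟨R, rfl, ?_⟩
  have hlim : ∀ x : ↥R, ∃ l : ℝ, Tendsto (x : ℕ → ℝ) F (nhds l) := fun x => x.2
  -- the standard "one except at n" sequences
  have he_lim : ∀ n : ℕ, Tendsto (fun k => if k = n then (0:ℝ) else 1) F (nhds 1) := by
    intro n
    refine tendsto_const_nhds.congr' ?_
    have hmem : ({n}ᶜ : Set ℕ) ∈ F := hF ((Set.finite_singleton n).compl_mem_cofinite)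
    filter_upwards [hmem] with k hk
    simp only [Set.mem_compl_iff, Set.mem_singleton_iff] at hk
    simp [hk]
  have he_mem : ∀ n : ℕ, (fun k => if k = n then (0:ℝ) else 1) ∈ R := fun n => ⟨1, he_lim n⟩
  have he_not0 : ∀ n : ℕ, ¬ Tendsto (fun k => if k = n then (0:ℝ) else 1) F (nhds 0) :=
    fun n h0 => one_ne_zero (tendsto_nhds_unique (he_lim n) h0)
  have hinvseq : Tendsto (fun k : ℕ => ((k:ℝ)+1)⁻¹) F (nhds 0) := by
    have h := tendsto_one_div_add_atTop_nhds_zero_nat (𝕜 := ℝ)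
    simp only [one_div] at h
    exact h.mono_left hFtop
  constructor
  -- pm
  · apply pm_of_gelfand
    have key : ∀ a b : ↥R, (a : ℕ → ℝ) + (b : ℕ → ℝ) = 1 → ∀ la : ℝ,
        Tendsto (a : ℕ → ℝ) F (nhds la) → 1/2 ≤ |la| →
        ∃ r s : ↥R, (1 + a * r) * (1 + b * s) = 0 := by
      intro a b hab la ha hla
      have hla0 : la ≠ 0 := by
        intro h; rw [h] at hla; simp at hla; linarith
      have hev : ∀ᶠ n in F, 1/4 < |(a : ℕ → ℝ) n| := by
        have hopen : IsOpen {y : ℝ | 1/4 < |y|} := isOpen_lt continuous_const continuous_abs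
        have hmem : la ∈ {y : ℝ | 1/4 < |y|} := by
          simp only [Set.mem_setOf_eq]; linarith [abs_nonneg la]
        exact ha (hopen.mem_nhds hmem)
      set r0 : ℕ → ℝ := fun n => if 1/4 < |(a : ℕ → ℝ) n| then -((a : ℕ → ℝ) n)⁻¹ else 0 with hr0
      set s0 : ℕ → ℝ := fun n => if 1/4 < |(a : ℕ → ℝ) n| then 0 else -((b : ℕ → ℝ) n)⁻¹ with hs0
      have hr0mem : r0 ∈ R := by
        refine ⟨-la⁻¹, ((ha.inv₀ hla0).neg).congr' ?_⟩
        filter_upwards [hev] with n hn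
        simp only [hr0]
        rw [if_pos hn]
      have hs0mem : s0 ∈ R := by
        refine ⟨0, tendsto_const_nhds.congr' ?_⟩
        filter_upwards [hev] with n hn
        simp only [hs0]
        rw [if_pos hn]
      refine ⟨⟨r0, hr0mem⟩, ⟨s0, hs0mem⟩, ?_⟩
      apply Subtype.ext
      funext n
      have habn : (a : ℕ → ℝ) n + (b : ℕ → ℝ) n = 1 := by
        have := congrFun hab n
        simpa using this
      simp only [Subring.coe_mul, Subring.coe_add, OneMemClass.coe_one, ZeroMemClass.coe_zero,
        Pi.mul_apply, Pi.add_apply, Pi.one_apply, Pi.zero_apply]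
      by_cases h : 1/4 < |(a : ℕ → ℝ) n|
      · have han : (a : ℕ → ℝ) n ≠ 0 := by
          intro h0; rw [h0] at h; simp at h; linarith
        show (1 + (a:ℕ→ℝ) n * r0 n) * (1 + (b:ℕ→ℝ) n * s0 n) = 0
        rw [hr0]
        simp only [if_pos h]
        rw [mul_neg, mul_inv_cancel₀ han]
        ring
      · have hbn : (b : ℕ → ℝ) n ≠ 0 := by
          intro h0
          rw [h0, add_zero] at habn
          rw [habn] at h
          simp at h
          linarith
        show (1 + (a:ℕ→ℝ) n * r0 n) * (1 + (b:ℕ→ℝ) n * s0 n) = 0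
        rw [hs0]
        simp only [if_neg h]
        rw [mul_neg, mul_inv_cancel₀ hbn]
        ring
    intro a b hab
    have hab' : (a : ℕ → ℝ) + (b : ℕ → ℝ) = 1 := by
      have := congrArg (fun x : ↥R => (x : ℕ → ℝ)) hab
      simpa using this
    obtain ⟨la, ha⟩ := hlim a
    obtain ⟨lb, hb⟩ := hlim b
    have hsum : la + lb = 1 := by
      have h1 : Tendsto ((a : ℕ → ℝ) + (b : ℕ → ℝ)) F (nhds (la + lb)) := ha.add hb
      rw [hab'] at h1
      exact tendsto_nhds_unique h1 tendsto_const_nhds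
    rcases le_or_gt (1/2) |la| with hcase | hcase
    · exact key a b hab' la ha hcase
    · have hlb : 1/2 ≤ |lb| := by
        have h1 : lb = 1 - la := by linarith
        have h2 : 1 - la ≤ |1 - la| := le_abs_self _
        have h3 : la ≤ |la| := le_abs_self _
        rw [h1]
        linarith
      obtain ⟨r, s, hrs⟩ := key b a (by rw [add_comm]; exact hab') lb hb hlb
      exact ⟨s, r, by rw [mul_comm]; exact hrs⟩
  -- semi
  · constructor
    · exact ⟨none⟩
    -- map_mul
    · intro a b
      ext p
      rcases p with _ | n
      · simp only [Set.mem_setOf_eq, Set.mem_union, reduceCtorEq, false_and, exists_false,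
          true_and, false_or]
        constructor
        · intro h
          obtain ⟨la, ha⟩ := hlim a
          obtain ⟨lb, hb⟩ := hlim b
          have hab : Tendsto ((a : ℕ → ℝ) * (b : ℕ → ℝ)) F (nhds (la * lb)) := ha.mul hb
          have hcoe : ((a * b : ↥R) : ℕ → ℝ) = (a : ℕ → ℝ) * (b : ℕ → ℝ) := rfl
          rw [hcoe] at h
          have : la * lb = 0 := tendsto_nhds_unique hab h
          rcases mul_eq_zero.mp this with h0 | h0
          · exact Or.inl (h0 ▸ ha)
          · exact Or.inr (h0 ▸ hb)
        · intro h
          have hcoe : ((a * b : ↥R) : ℕ → ℝ) = (a : ℕ → ℝ) * (b : ℕ → ℝ) := rfl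
          rw [hcoe]
          rcases h with h | h
          · obtain ⟨lb, hb⟩ := hlim b
            have := h.mul hb; rwa [zero_mul] at this
          · obtain ⟨la, ha⟩ := hlim a
            have := ha.mul h; rwa [mul_zero] at this
      · simp only [Set.mem_setOf_eq, Set.mem_union, Option.some.injEq, reduceCtorEq,
          false_and, or_false, exists_eq_left']
        have hcoe : ((a * b : ↥R) : ℕ → ℝ) n = (a : ℕ → ℝ) n * (b : ℕ → ℝ) n := rfl
        rw [hcoe, mul_eq_zero]
    -- map_one
    · ext p
      rcases p with _ | n
      · simp only [Set.mem_setOf_eq, Set.mem_empty_iff_false, iff_false, reduceCtorEq,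
          false_and, exists_false, true_and, false_or, not_and]
        intro h0
        exact one_ne_zero (tendsto_nhds_unique (tendsto_const_nhds : Tendsto ((1:↥R):ℕ→ℝ) F (nhds 1)) h0)
      · simp only [Set.mem_setOf_eq, Set.mem_empty_iff_false, iff_false, Option.some.injEq,
          reduceCtorEq, false_and, or_false, exists_eq_left', not_or]
        exact one_ne_zero
    -- eq_univ_iff
    · intro a
      constructor
      · intro h
        have hz : ∀ n, (a : ℕ → ℝ) n = 0 := by
          intro n
          have hp : some n ∈ (Set.univ : Set (Option ℕ)) := Set.mem_univ _
          rw [← h] at hp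
          simp only [Set.mem_setOf_eq, Option.some.injEq, reduceCtorEq, false_and, or_false,
            exists_eq_left'] at hp
          exact hp
        exact Subtype.ext (funext hz)
      · intro h
        subst h
        ext p
        simp only [Set.mem_univ, iff_true, Set.mem_setOf_eq]
        rcases p with _ | n
        · exact Or.inr ⟨rfl, tendsto_const_nhds⟩
        · exact Or.inl ⟨n, rfl, rfl⟩
    -- inter_eq
    · intro a b
      refine ⟨a * a + b * b, Ideal.mem_span_pair.mpr ⟨a, b, rfl⟩, ?_, ?_⟩
      · ext p
        have hcoe : ∀ n, ((a * a + b * b : ↥R) : ℕ → ℝ) n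
            = (a : ℕ → ℝ) n * (a : ℕ → ℝ) n + (b : ℕ → ℝ) n * (b : ℕ → ℝ) n := fun n => rfl
        rcases p with _ | n
        · simp only [Set.mem_inter_iff, Set.mem_setOf_eq, reduceCtorEq, false_and,
            exists_false, true_and, false_or]
          constructor
          · rintro ⟨h1, h2⟩
            have : Tendsto ((a*a+b*b : ↥R) : ℕ → ℝ) F (nhds (0*0+0*0)) := (h1.mul h1).add (h2.mul h2)
            simpa using this
          · intro h
            obtain ⟨la, ha⟩ := hlim a
            obtain ⟨lb, hb⟩ := hlim b
            have hc : Tendsto ((a*a+b*b : ↥R) : ℕ → ℝ) F (nhds (la*la+lb*lb)) := (ha.mul ha).add (hb.mul hb)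
            have h0 : la * la + lb * lb = 0 := tendsto_nhds_unique hc h
            have hla : la = 0 := by nlinarith [mul_self_nonneg la, mul_self_nonneg lb]
            have hlb : lb = 0 := by nlinarith [mul_self_nonneg la, mul_self_nonneg lb]
            exact ⟨hla ▸ ha, hlb ▸ hb⟩
        · simp only [Set.mem_inter_iff, Set.mem_setOf_eq, Option.some.injEq, reduceCtorEq,
            false_and, or_false, exists_eq_left', hcoe]
          constructor
          · rintro ⟨h1, h2⟩
            rw [h1, h2]; ring
          · intro h
            have h1 : (a : ℕ → ℝ) n = 0 := by nlinarith [mul_self_nonneg ((a:ℕ→ℝ) n), mul_self_nonneg ((b:ℕ→ℝ) n)]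
            have h2 : (b : ℕ → ℝ) n = 0 := by nlinarith [mul_self_nonneg ((a:ℕ→ℝ) n), mul_self_nonneg ((b:ℕ→ℝ) n)]
            exact ⟨h1, h2⟩
      · intro p hp
        have hcoe : ∀ n, ((a * a + b * b : ↥R) : ℕ → ℝ) n
            = (a : ℕ → ℝ) n * (a : ℕ → ℝ) n + (b : ℕ → ℝ) n * (b : ℕ → ℝ) n := fun n => rfl
        rcases p with _ | n
        · simp only [Set.mem_setOf_eq, reduceCtorEq, false_and, exists_false, true_and,
            false_or] at hp ⊢
          obtain ⟨la, ha⟩ := hlim a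
          obtain ⟨lb, hb⟩ := hlim b
          have hc : Tendsto ((a*a+b*b : ↥R) : ℕ → ℝ) F (nhds (la*la+lb*lb)) := (ha.mul ha).add (hb.mul hb)
          have h0 : la * la + lb * lb = 0 := tendsto_nhds_unique hc hp
          have hla : la = 0 := by nlinarith [mul_self_nonneg la, mul_self_nonneg lb]
          have hlb : lb = 0 := by nlinarith [mul_self_nonneg la, mul_self_nonneg lb]
          have : Tendsto ((a + b : ↥R) : ℕ → ℝ) F (nhds (la + lb)) := ha.add hb
          rw [hla, hlb] at this
          simpa using this
        · simp only [Set.mem_setOf_eq, Option.some.injEq, reduceCtorEq, false_and, or_false,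
            exists_eq_left', hcoe] at hp ⊢
          have h1 : (a : ℕ → ℝ) n = 0 := by nlinarith [mul_self_nonneg ((a:ℕ→ℝ) n), mul_self_nonneg ((b:ℕ→ℝ) n)]
          have h2 : (b : ℕ → ℝ) n = 0 := by nlinarith [mul_self_nonneg ((a:ℕ→ℝ) n), mul_self_nonneg ((b:ℕ→ℝ) n)]
          show ((a + b : ↥R) : ℕ → ℝ) n = 0
          have : ((a + b : ↥R) : ℕ → ℝ) n = (a : ℕ → ℝ) n + (b : ℕ → ℝ) n := rfl
          rw [this, h1, h2, add_zero]
    -- principal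
    · intro a b hdisj
      have hn : ∀ n, ¬((a : ℕ → ℝ) n = 0 ∧ (b : ℕ → ℝ) n = 0) := by
        intro n hcontra
        have hp := Set.eq_empty_iff_forall_notMem.mp hdisj (some n)
        simp only [Set.mem_inter_iff, Set.mem_setOf_eq, Option.some.injEq, reduceCtorEq,
          false_and, or_false, exists_eq_left'] at hp
        exact hp hcontra
      have hno : ¬(Tendsto (a : ℕ → ℝ) F (nhds 0) ∧ Tendsto (b : ℕ → ℝ) F (nhds 0)) := by
        intro hcontra
        have hp := Set.eq_empty_iff_forall_notMem.mp hdisj none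
        simp only [Set.mem_inter_iff, Set.mem_setOf_eq, reduceCtorEq, false_and,
          exists_false, true_and, false_or] at hp
        exact hp hcontra
      obtain ⟨la, ha⟩ := hlim a
      obtain ⟨lb, hb⟩ := hlim b
      have hL : la * la + lb * lb ≠ 0 := by
        intro h0
        have hla : la = 0 := by nlinarith [mul_self_nonneg la, mul_self_nonneg lb]
        have hlb : lb = 0 := by nlinarith [mul_self_nonneg la, mul_self_nonneg lb]
        exact hno ⟨hla ▸ ha, hlb ▸ hb⟩
      set c : ↥R := a * a + b * b with hc
      have hcn : ∀ n, (c : ℕ → ℝ) n ≠ 0 := by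
        intro n h0
        have hco : (c : ℕ → ℝ) n = (a : ℕ → ℝ) n * (a : ℕ → ℝ) n + (b : ℕ → ℝ) n * (b : ℕ → ℝ) n := rfl
        rw [hco] at h0
        have h1 : (a : ℕ → ℝ) n = 0 := by nlinarith [mul_self_nonneg ((a:ℕ→ℝ) n), mul_self_nonneg ((b:ℕ→ℝ) n)]
        have h2 : (b : ℕ → ℝ) n = 0 := by nlinarith [mul_self_nonneg ((a:ℕ→ℝ) n), mul_self_nonneg ((b:ℕ→ℝ) n)]
        exact hn n ⟨h1, h2⟩
      have hctend : Tendsto (c : ℕ → ℝ) F (nhds (la * la + lb * lb)) := (ha.mul ha).add (hb.mul hb)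
      have hcinvmem : (fun n => ((c : ℕ → ℝ) n)⁻¹) ∈ R :=
        ⟨(la * la + lb * lb)⁻¹, hctend.inv₀ hL⟩
      have hone : (⟨fun n => ((c : ℕ → ℝ) n)⁻¹, hcinvmem⟩ : ↥R) * c = 1 := by
        apply Subtype.ext
        funext n
        show ((c : ℕ → ℝ) n)⁻¹ * (c : ℕ → ℝ) n = 1
        exact inv_mul_cancel₀ (hcn n)
      have hcspan : c ∈ Ideal.span {a, b} := Ideal.mem_span_pair.mpr ⟨a, b, rfl⟩
      have htop : Ideal.span ({a, b} : Set ↥R) = ⊤ := by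
        rw [Ideal.eq_top_iff_one]
        rw [← hone]
        exact Ideal.mul_mem_left _ _ hcspan
      refine ⟨1, 1, one_pos, one_pos, ?_⟩
      rw [pow_one, pow_one, htop]
      exact ⟨⟨1, Ideal.span_singleton_one.symm⟩⟩
  -- separates
  · intro l₁ l₂ hne
    rcases l₁ with _ | n <;> rcases l₂ with _ | m
    · exact absurd rfl hne
    · -- none, some m : use 1/(k+1)
      refine ⟨⟨fun k => ((k:ℝ)+1)⁻¹, ⟨0, hinvseq⟩⟩, Or.inl ⟨?_, ?_⟩⟩
      · exact Or.inr ⟨rfl, hinvseq⟩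
      · simp only [Set.mem_setOf_eq, Option.some.injEq, reduceCtorEq, false_and, or_false,
          exists_eq_left', not_or]
        intro h
        have : ((m:ℝ)+1) ≠ 0 := by positivity
        exact this (by rwa [inv_eq_zero] at h)
    · -- some n, none : use the sequence vanishing exactly at n
      refine ⟨⟨fun k => if k = n then (0:ℝ) else 1, he_mem n⟩, Or.inl ⟨?_, ?_⟩⟩
      · exact Or.inl ⟨n, rfl, by simp⟩
      · simp only [Set.mem_setOf_eq, reduceCtorEq, false_and, exists_false, true_and,
          false_or]
        exact he_not0 n
    · -- some n, some m with n ≠ m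
      have hnm : n ≠ m := fun h => hne (by rw [h])
      refine ⟨⟨fun k => if k = n then (0:ℝ) else 1, he_mem n⟩, Or.inl ⟨?_, ?_⟩⟩
      · exact Or.inl ⟨n, rfl, by simp⟩
      · simp only [Set.mem_setOf_eq, Option.some.injEq, reduceCtorEq, false_and, or_false,
          exists_eq_left', not_or]
        simp [Ne.symm hnm]
  -- disjoint
  · intro l a hl
    rcases l with _ | n
    · -- l = none : a does not tend to 0
      have hna : ¬ Tendsto (a : ℕ → ℝ) F (nhds 0) := by
        intro h
        exact hl (Or.inr ⟨rfl, h⟩)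
      set b0 : ℕ → ℝ := fun k => if (a : ℕ → ℝ) k = 0 then ((k:ℝ)+1)⁻¹ else 0 with hb0
      have hb0nonneg : ∀ k, 0 ≤ b0 k := by
        intro k
        rw [hb0]
        dsimp only
        split_ifs
        · positivity
        · exact le_refl 0
      have hb0le : ∀ k, b0 k ≤ ((k:ℝ)+1)⁻¹ := by
        intro k
        rw [hb0]
        dsimp only
        split_ifs
        · exact le_refl _
        · positivity
      have hb0tend : Tendsto b0 F (nhds 0) := squeeze_zero hb0nonneg hb0le hinvseq
      refine ⟨⟨b0, ⟨0, hb0tend⟩⟩, Or.inr ⟨rfl, hb0tend⟩, ?_⟩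
      apply Set.eq_empty_iff_forall_notMem.mpr
      rintro (_ | k) hp
      · simp only [Set.mem_inter_iff, Set.mem_setOf_eq, reduceCtorEq, false_and,
          exists_false, true_and, false_or] at hp
        exact hna hp.1
      · simp only [Set.mem_inter_iff, Set.mem_setOf_eq, Option.some.injEq, reduceCtorEq,
          false_and, or_false, exists_eq_left'] at hp
        obtain ⟨h1, h2⟩ := hp
        have h2' : b0 k = 0 := h2
        rw [hb0] at h2'
        dsimp only at h2'
        rw [if_pos h1] at h2'
        have hpos : (0:ℝ) < ((k:ℝ)+1)⁻¹ := by positivity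
        exact hpos.ne' h2'
    · -- l = some n : a n ≠ 0
      have hna : (a : ℕ → ℝ) n ≠ 0 := by
        intro h
        exact hl (Or.inl ⟨n, rfl, h⟩)
      refine ⟨⟨fun k => if k = n then (0:ℝ) else 1, he_mem n⟩, ?_, ?_⟩
      · exact Or.inl ⟨n, rfl, by simp⟩
      · apply Set.eq_empty_iff_forall_notMem.mpr
        rintro (_ | k) hp
        · simp only [Set.mem_inter_iff, Set.mem_setOf_eq, reduceCtorEq, false_and,
            exists_false, true_and, false_or] at hp
          exact he_not0 n hp.2
        · simp only [Set.mem_inter_iff, Set.mem_setOf_eq, Option.some.injEq, reduceCtorEq,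
            false_and, or_false, exists_eq_left'] at hp
          obtain ⟨h1, h2⟩ := hp
          by_cases hk : k = n
          · exact hna (hk ▸ h1)
          · simp [hk] at h2
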